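/- There exists a point x in the unit sphere of c that is not an extreme point of the closed unit ball of c and satisfies sup{x*(x) : x* ∈ ext(B_{c*}) \ D(x)} = 1, where c* is identified with ℓ₁ via the pairing f(x) = f(1)·lim_i x(i) + Σ_{i≥1} f(i+1)x(i). -/

import Mathlib

open Filter Topology Metric
open scoped ENNReal

noncomputable section

/-- The space `ℓ₁` of absolutely summable real sequences. -/
abbrev EllOne : Type := lp (fun _ : ℕ => ℝ) 1

/-- The subspace of `ℓ∞` consisting of convergent real sequences. -/
def convSeq : Subspace ℝ (lp (fun _ : ℕ => ℝ) ∞) where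
  carrier := {f | ∃ l : ℝ, Tendsto (fun n => f n) atTop (𝓝 l)}
  add_mem' := by
    rintro f g ⟨a, ha⟩ ⟨b, hb⟩
    exact ⟨a + b, by simpa [lp.coeFn_add] using ha.add hb⟩
  zero_mem' := ⟨0, by simp [lp.coeFn_zero]⟩
  smul_mem' := by
    rintro c f ⟨a, ha⟩
    exact ⟨c * a, by simpa [lp.coeFn_smul] using ha.const_mul c⟩

/-- The Banach space `c` of convergent real sequences with the sup norm,
realized as a subspace of `ℓ∞`. -/
abbrev SpaceC : Type := ↥convSeq

/-- A normed space is polyhedral if the unit ball of each of its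
finite-dimensional subspaces is a polytope (the convex hull of finitely many points). -/
def IsPolyhedralSpace (X : Type*) [NormedAddCommGroup X] [NormedSpace ℝ X] : Prop :=
  ∀ Y : Subspace ℝ X, FiniteDimensional ℝ Y →
    ∃ F : Set Y, F.Finite ∧ closedBall (0 : Y) 1 = convexHull ℝ F

/-- The set of extreme points of the closed unit ball of the dual of `X`. -/
def extBdual (X : Type*) [NormedAddCommGroup X] [NormedSpace ℝ X] :
    Set (StrongDual ℝ X) :=
  Set.extremePoints ℝ (closedBall (0 : StrongDual ℝ X) 1)

/-- `D(x) = {x* ∈ S_{X*} : x*(x) = 1}`. -/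
def Dface {X : Type*} [NormedAddCommGroup X] [NormedSpace ℝ X] (x : X) :
    Set (StrongDual ℝ X) :=
  {f | ‖f‖ = 1 ∧ f x = 1}

/-- The limit of a convergent sequence `x ∈ c`. -/
def cLim (x : SpaceC) : ℝ :=
  limUnder atTop (fun n => (x : lp (fun _ : ℕ => ℝ) ∞) n)

/-- The duality pairing identifying `ℓ₁` with the dual `c*` of `c`:
`f(x) = f(0)·lim_i x(i) + Σ_{i≥0} f(i+1)·x(i)` (indices starting from `0`). -/
def cPairing (f : EllOne) (x : SpaceC) : ℝ :=
  f 0 * cLim x + ∑' i : ℕ, f (i + 1) * (x : lp (fun _ : ℕ => ℝ) ∞) i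


/-- Auxiliary sequence `n ↦ n/(n+1)`. -/
def xSeq : ℕ → ℝ := fun n => n / (n + 1)

lemma xSeq_eq (n : ℕ) : xSeq n = 1 - 1/(n+1) := by
  have h : (n : ℝ) + 1 ≠ 0 := by positivity
  field_simp [xSeq]
  simp only [xSeq]; rw [div_mul_cancel₀ _ h]; ring

lemma xSeq_nonneg (n : ℕ) : 0 ≤ xSeq n := by unfold xSeq; positivity

lemma xSeq_lt_one (n : ℕ) : xSeq n < 1 := by
  rw [xSeq_eq]; have : (0:ℝ) < 1/(n+1) := by positivity
  linarith

lemma xSeq_tendsto : Tendsto xSeq atTop (𝓝 1) := by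
  have h : Tendsto (fun n : ℕ => 1 - 1/((n:ℝ)+1)) atTop (𝓝 (1 - 0)) :=
    tendsto_const_nhds.sub tendsto_one_div_add_atTop_nhds_zero_nat
  rw [sub_zero] at h
  refine h.congr fun n => ?_
  rw [xSeq_eq]

lemma xSeq_mem : Memℓp xSeq ∞ := by
  apply memℓp_infty
  refine ⟨1, ?_⟩
  rintro y ⟨n, rfl⟩
  simp only [Real.norm_eq_abs, abs_of_nonneg (xSeq_nonneg n)]
  exact (xSeq_lt_one n).le

def xInf : lp (fun _ : ℕ => ℝ) ∞ := ⟨xSeq, xSeq_mem⟩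

@[simp] lemma xInf_apply (n : ℕ) : xInf n = xSeq n := rfl

def xC : SpaceC := ⟨xInf, ⟨1, by simpa using xSeq_tendsto⟩⟩

@[simp] lemma xC_coe_apply (n : ℕ) : (xC : lp (fun _ : ℕ => ℝ) ∞) n = xSeq n := rfl

lemma cLim_xC : cLim xC = 1 := by
  have : Tendsto (fun n => (xC : lp (fun _ : ℕ => ℝ) ∞) n) atTop (𝓝 1) := by
    simpa using xSeq_tendsto
  exact this.limUnder_eq

lemma norm_xC : ‖xC‖ = 1 := by
  have hcoe : ‖xC‖ = ‖xInf‖ := rfl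
  rw [hcoe, lp.norm_eq_ciSup]
  have habs : ∀ i : ℕ, ‖xInf i‖ = xSeq i := fun i => by
    simp [Real.norm_eq_abs, abs_of_nonneg (xSeq_nonneg i)]
  have hbdd : BddAbove (Set.range fun i => ‖xInf i‖) := lp.memℓp xInf
  apply le_antisymm
  · exact ciSup_le fun i => by rw [habs]; exact (xSeq_lt_one i).le
  · refine le_of_tendsto xSeq_tendsto ?_
    filter_upwards with n
    calc xSeq n = ‖xInf n‖ := (habs n).symm
    _ ≤ ⨆ i, ‖xInf i‖ := le_ciSup hbdd n

def eInf : lp (fun _ : ℕ => ℝ) ∞ := lp.single ∞ 0 (1/2 : ℝ)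

lemma eInf_tendsto : Tendsto (fun n => eInf n) atTop (𝓝 0) := by
  apply Tendsto.congr' _ tendsto_const_nhds
  filter_upwards [eventually_ge_atTop 1] with n hn
  have : n ≠ 0 := by omega
  simp [eInf, lp.single_apply_ne _ _ _ this, Pi.single_apply, this]

def eC : SpaceC := ⟨eInf, ⟨0, eInf_tendsto⟩⟩

lemma norm_le_one_aux (s : ℝ) (hs : s = 1 ∨ s = -1) : ‖xC + s • eC‖ ≤ 1 := by
  have hcoe : ‖xC + s • eC‖ = ‖((xC + s • eC : SpaceC) : lp (fun _ : ℕ => ℝ) ∞)‖ := rfl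
  rw [hcoe]
  apply lp.norm_le_of_forall_le zero_le_one
  intro i
  have hi : ((xC + s • eC : SpaceC) : lp (fun _ : ℕ => ℝ) ∞) i = xSeq i + s * eInf i := by
    push_cast
    simp only [Pi.add_apply, lp.coeFn_smul, Pi.smul_apply, xC_coe_apply]
    rfl
  rw [hi]
  rcases Nat.eq_zero_or_pos i with rfl | hpos
  · have h0 : eInf 0 = 1/2 := lp.single_apply_self _ _ _
    have hx0 : xSeq 0 = 0 := by simp [xSeq]
    rw [h0, hx0]
    rcases hs with rfl | rfl <;> norm_num
  · have : eInf i = 0 := lp.single_apply_ne _ _ _ (by omega)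
    rw [this, mul_zero, add_zero, Real.norm_eq_abs, abs_of_nonneg (xSeq_nonneg i)]
    exact (xSeq_lt_one i).le

lemma xC_not_extreme : xC ∉ Set.extremePoints ℝ (closedBall (0 : SpaceC) 1) := by
  intro h
  have h1 : xC - eC ∈ closedBall (0 : SpaceC) 1 := by
    rw [mem_closedBall_zero_iff]
    have : xC - eC = xC + (-1 : ℝ) • eC := by module
    rw [this]; exact norm_le_one_aux _ (Or.inr rfl)
  have h2 : xC + eC ∈ closedBall (0 : SpaceC) 1 := by
    rw [mem_closedBall_zero_iff]
    have : xC + eC = xC + (1 : ℝ) • eC := by module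
    rw [this]; exact norm_le_one_aux _ (Or.inl rfl)
  have hseg : xC ∈ openSegment ℝ (xC - eC) (xC + eC) :=
    ⟨1/2, 1/2, by norm_num, by norm_num, by norm_num, by module⟩
  obtain ⟨-, hE⟩ := mem_extremePoints.mp h
  have := (hE (xC - eC) h1 (xC + eC) h2 hseg).1
  have h0 : eC = 0 := by
    have := sub_eq_self.mp this
    simpa using this
  have : eInf 0 = 0 := by
    have := congrArg (fun z : SpaceC => (z : lp (fun _ : ℕ => ℝ) ∞) 0) h0
    simp at this; exact this
  simp [eInf, lp.single_apply_self] at this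

lemma ellOne_hasSum (f : EllOne) : HasSum (fun i => ‖f i‖) ‖f‖ := by
  simpa using lp.hasSum_norm (p := 1) (by norm_num) f

lemma ellOne_two_coord_le (f : EllOne) (j k : ℕ) (hjk : j ≠ k) : ‖f j‖ + ‖f k‖ ≤ ‖f‖ := by
  have := sum_le_hasSum {j, k} (fun i _ => norm_nonneg (f i)) (ellOne_hasSum f)
  rwa [Finset.sum_insert (by simp [hjk]), Finset.sum_singleton] at this

lemma single_extreme (k : ℕ) :
    lp.single (E := fun _ : ℕ => ℝ) 1 k (1 : ℝ) ∈ Set.extremePoints ℝ (closedBall (0 : EllOne) 1) := by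
  have hnorm : ‖lp.single (E := fun _ : ℕ => ℝ) 1 k (1 : ℝ)‖ = 1 := by
    have := lp.norm_single (E := fun _ : ℕ => ℝ) (p := 1) (by norm_num) k (1:ℝ)
    simpa using this
  rw [mem_extremePoints]
  refine ⟨by simp [mem_closedBall_zero_iff, hnorm], ?_⟩
  intro a ha b hb hseg
  obtain ⟨t, s, ht, hs, hts, heq⟩ := hseg
  rw [mem_closedBall_zero_iff] at ha hb
  have hk : t * a k + s * b k = 1 := by
    have := congrArg (fun g : EllOne => g k) heq
    simp only [lp.coeFn_add, lp.coeFn_smul, Pi.add_apply, Pi.smul_apply, smul_eq_mul] at this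
    simpa [lp.single_apply_self] using this
  have hak : |a k| ≤ 1 := le_trans (by simpa using lp.norm_apply_le_norm one_ne_zero a k) ha
  have hbk : |b k| ≤ 1 := le_trans (by simpa using lp.norm_apply_le_norm one_ne_zero b k) hb
  have hak1 : a k = 1 := by nlinarith [abs_le.mp hak, abs_le.mp hbk]
  have hbk1 : b k = 1 := by nlinarith [abs_le.mp hak, abs_le.mp hbk]
  have key : ∀ (g : EllOne), ‖g‖ ≤ 1 → g k = 1 →
      g = lp.single (E := fun _ : ℕ => ℝ) 1 k (1 : ℝ) := by
    intro g hg hgk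
    apply lp.ext
    funext j
    rcases eq_or_ne j k with rfl | hjk
    · simp [lp.single_apply_self, hgk]
    · have h2 := ellOne_two_coord_le g j k hjk
      rw [hgk] at h2
      simp only [norm_one] at h2
      have : ‖g j‖ ≤ 0 := by linarith
      have : g j = 0 := norm_le_zero_iff.mp this
      simp [this, lp.single_apply_ne _ _ _ hjk, Pi.single_apply, hjk]
  exact ⟨key a ha hak1, key b hb hbk1⟩

lemma cPairing_single (k : ℕ) :
    cPairing (lp.single (E := fun _ : ℕ => ℝ) 1 (k+1) (1 : ℝ)) xC = xSeq k := by
  unfold cPairing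
  rw [lp.single_apply_ne _ _ _ (by omega : (0:ℕ) ≠ k+1), zero_mul, zero_add]
  rw [tsum_eq_single k]
  · rw [lp.single_apply_self, xC_coe_apply, one_mul]
  · intro b hb
    rw [lp.single_apply_ne _ _ _ (by omega : b+1 ≠ k+1), zero_mul]

lemma cPairing_le (f : EllOne) (hf : ‖f‖ ≤ 1) : cPairing f xC ≤ 1 := by
  unfold cPairing
  rw [cLim_xC, mul_one]
  have hsum : Summable (fun i => ‖f i‖) := (ellOne_hasSum f).summable
  have hsum' : Summable (fun i => ‖f (i+1)‖) := (summable_nat_add_iff 1).2 hsum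
  have hxb : ∀ i, |(xC : lp (fun _ : ℕ => ℝ) ∞) i| ≤ 1 := fun i => by
    rw [xC_coe_apply, abs_of_nonneg (xSeq_nonneg i)]; exact (xSeq_lt_one i).le
  have hterm : ∀ i, f (i+1) * (xC : lp (fun _ : ℕ => ℝ) ∞) i ≤ ‖f (i+1)‖ := fun i => by
    calc f (i+1) * (xC : lp (fun _ : ℕ => ℝ) ∞) i
        ≤ |f (i+1) * (xC : lp (fun _ : ℕ => ℝ) ∞) i| := le_abs_self _
      _ = |f (i+1)| * |(xC : lp (fun _ : ℕ => ℝ) ∞) i| := abs_mul _ _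
      _ ≤ |f (i+1)| * 1 := mul_le_mul_of_nonneg_left (hxb i) (abs_nonneg _)
      _ = ‖f (i+1)‖ := by rw [mul_one]; rfl
  have hsummul : Summable (fun i => f (i+1) * (xC : lp (fun _ : ℕ => ℝ) ∞) i) := by
    apply Summable.of_norm_bounded hsum'
    intro i
    rw [norm_mul]
    calc ‖f (i+1)‖ * ‖(xC : lp (fun _ : ℕ => ℝ) ∞) i‖ ≤ ‖f (i+1)‖ * 1 :=
      mul_le_mul_of_nonneg_left (hxb i) (norm_nonneg _)
    _ = ‖f (i+1)‖ := mul_one _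
  calc f 0 + ∑' i, f (i+1) * (xC : lp (fun _ : ℕ => ℝ) ∞) i
      ≤ ‖f 0‖ + ∑' i, ‖f (i+1)‖ :=
        add_le_add (le_abs_self _) (Summable.tsum_le_tsum hterm hsummul hsum')
    _ = ∑' i, ‖f i‖ := (Summable.tsum_eq_zero_add hsum).symm
    _ = ‖f‖ := (ellOne_hasSum f).tsum_eq
    _ ≤ 1 := hf

/-- There is a point `x` of the unit sphere of `c` that is not an extreme point of the
closed unit ball of `c` and satisfies `sup{x*(x) : x* ∈ ext(B_{c*}) \ D(x)} = 1`,
where `c*` is identified with `ℓ₁` via the pairing `cPairing`. -/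
theorem spaceC_bad_point_exists :
    ∃ x : SpaceC, ‖x‖ = 1 ∧
      x ∉ Set.extremePoints ℝ (closedBall (0 : SpaceC) 1) ∧
      sSup ((fun f : EllOne => cPairing f x) ''
        (Set.extremePoints ℝ (closedBall (0 : EllOne) 1) \
          {f : EllOne | ‖f‖ = 1 ∧ cPairing f x = 1})) = 1 := by
  refine ⟨xC, norm_xC, xC_not_extreme, ?_⟩
  set S := ((fun f : EllOne => cPairing f xC) ''
      (Set.extremePoints ℝ (closedBall (0 : EllOne) 1) \
        {f : EllOne | ‖f‖ = 1 ∧ cPairing f xC = 1})) with hS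
  have hub : ∀ y ∈ S, y ≤ 1 := by
    rintro y ⟨f, ⟨hext, -⟩, rfl⟩
    exact cPairing_le f (mem_closedBall_zero_iff.mp hext.1)
  have hmem : ∀ k : ℕ, xSeq k ∈ S := by
    intro k
    refine ⟨lp.single 1 (k+1) (1:ℝ), ⟨single_extreme (k+1), ?_⟩, cPairing_single k⟩
    rintro ⟨-, hpair⟩
    rw [cPairing_single k] at hpair
    exact (xSeq_lt_one k).ne hpair
  have hbdd : BddAbove S := ⟨1, hub⟩
  apply le_antisymm
  · exact Real.sSup_le hub (by linarith [xSeq_nonneg 0, xSeq_lt_one 0])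
  · refine le_of_tendsto xSeq_tendsto ?_
    filter_upwards with n
    exact le_csSup hbdd (hmem n)


end
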